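/- Let (X, χ) be a deterministic reader–writer transition system over a state set 𝒮 in which there is no infinite chain c₀ → c₁ → c₂ → ⋯ of consecutive silent writer transitions. Then cost similarity coincides with cost equivalence: two readers p, q are related by the greatest cost simulation iff cst^r(p) = cst^r(q), and two writers c, d are related by the greatest cost simulation iff cst^w(c) = cst^w(d). -/

import Mathlib

/-! # Statement 5: cost similarity = cost equivalence for deterministic reader–writer systems without silent divergence -/
namespace RW

/-- A deterministic reader–writer transition system over a state set `S`:
`rstep p s = c` means `p,s → c`; `wstep c = .inl (d,s)` means `c →ˢ d`;
`wstep c = .inr (.inl d)` means `c → d`; `wstep c = .inr (.inr s)` means `c ↓ s`. -/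
structure DRW (S : Type) where
  Rd : Type
  Wr : Type
  rstep : Rd → S → Wr
  wstep : Wr → (Wr × S) ⊕ (Wr ⊕ S)

variable {S : Type}

/-- The output transition `c →ˢ d`. -/
def OutTr (M : DRW S) (c : M.Wr) (s : S) (d : M.Wr) : Prop := M.wstep c = .inl (d, s)

/-- The silent transition `c → d`. -/
def TauTr (M : DRW S) (c d : M.Wr) : Prop := M.wstep c = .inr (.inl d)

/-- The termination transition `c ↓ s`. -/
def DownTr (M : DRW S) (c : M.Wr) (s : S) : Prop := M.wstep c = .inr (.inr s)

/-- The weak silent transition `c ⇒ d`: a finite chain of silent steps. -/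
def WSil (M : DRW S) : M.Wr → M.Wr → Prop := Relation.ReflTransGen (TauTr M)

/-- The weak output transition `c ⇒ˢ d`: `c ⇒ c' →ˢ d` for some `c'`. -/
def WOut (M : DRW S) (c : M.Wr) (s : S) (d : M.Wr) : Prop :=
  ∃ c', WSil M c c' ∧ OutTr M c' s d

/-- The weak termination transition `c ⇓ s`: `c ⇒ c' ↓ s` for some `c'`. -/
def WDone (M : DRW S) (c : M.Wr) (s : S) : Prop :=
  ∃ c', WSil M c c' ∧ DownTr M c' s

/-- `ReachL M c l d`: from `c` there is a chain of weak output transitions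
producing the list `l` of states and ending in `d`. -/
def ReachL (M : DRW S) : M.Wr → List S → M.Wr → Prop
  | c, [], d => c = d
  | c, s :: l, d => ∃ c', WOut M c s c' ∧ ReachL M c' l d

/-- `TrcEntry M c n v` holds iff the `n`-th entry (0-indexed) of the trace
`trc^w(c)` is `v`, where `v = .inl s` tags an intermediate output state and
`v = .inr s` tags the final state of a finite trace. -/
def TrcEntry (M : DRW S) (c : M.Wr) (n : ℕ) (v : S ⊕ S) : Prop :=
  (∃ l d s d', ReachL M c l d ∧ l.length = n ∧ WOut M d s d' ∧ v = .inl s) ∨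
  (∃ l d s, ReachL M c l d ∧ l.length = n ∧ WDone M d s ∧ v = .inr s)

open Classical in
/-- The writer trace map `trc^w : X_w → 𝒮^∞`, with a (nonempty, finite or infinite)
trace encoded as a function `ℕ → Option (S ⊕ S)`: a finite trace `(s₁,…,sₙ,s)`
sends `0,…,n-1` to `some (.inl sᵢ₊₁)`, `n` to `some (.inr s)` and all larger
numbers to `none`; an infinite trace `(s₁,s₂,…)` sends each `n` to
`some (.inl sₙ₊₁)`. -/
noncomputable def trcW (M : DRW S) (c : M.Wr) : ℕ → Option (S ⊕ S) := fun n =>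
  if h : ∃ v, TrcEntry M c n v then some h.choose else none

/-- The reader trace map `trc^r : X_r → (𝒮^∞)^𝒮`: `trc^r(p)(s) = trc^w(c)` where
`p,s → c`. -/
noncomputable def trcR (M : DRW S) (p : M.Rd) (s : S) : ℕ → Option (S ⊕ S) :=
  trcW M (M.rstep p s)

open Classical in
/-- The writer cost map: `cstW M c = some (n,s)` iff `trc^w(c) = (s₁,…,sₙ,s)` is
finite, and `none` (i.e. `*`) iff `trc^w(c)` is infinite. -/
noncomputable def cstW (M : DRW S) (c : M.Wr) : Option (ℕ × S) :=
  if h : ∃ ns : ℕ × S, trcW M c ns.1 = some (.inr ns.2) then some h.choose else none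

/-- The reader cost map. -/
noncomputable def cstR (M : DRW S) (p : M.Rd) (s : S) : Option (ℕ × S) :=
  cstW M (M.rstep p s)

/-- The writer termination map: the last element of a finite trace, `none` (`*`)
for an infinite trace. -/
noncomputable def terW (M : DRW S) (c : M.Wr) : Option S := (cstW M c).map Prod.snd

/-- The reader termination map. -/
noncomputable def terR (M : DRW S) (p : M.Rd) (s : S) : Option S :=
  (cstR M p s).map Prod.snd

end RW

namespace RW

variable {S : Type}

/-- A cost simulation on a deterministic reader–writer transition system. -/
def IsCostSim (M : DRW S) (Rr : M.Rd → M.Rd → Prop) (Rw : M.Wr → M.Wr → Prop) : Prop :=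
  (∀ p q s c, Rr p q → M.rstep p s = c → ∃ d, M.rstep q s = d ∧ Rw c d) ∧
  (∀ c d c', Rw c d → TauTr M c c' → ∃ d', WSil M d d' ∧ Rw c' d') ∧
  (∀ c d s c', Rw c d → OutTr M c s c' → ∃ d' s', WOut M d s' d' ∧ Rw c' d') ∧
  (∀ c d s, Rw c d → DownTr M c s → WDone M d s)

/-- Two readers are related by the greatest cost simulation (the union of all
cost simulations). -/
def CostSimR (M : DRW S) (p q : M.Rd) : Prop :=
  ∃ Rr Rw, IsCostSim M Rr Rw ∧ Rr p q

/-- Two writers are related by the greatest cost simulation. -/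
def CostSimW (M : DRW S) (c d : M.Wr) : Prop :=
  ∃ Rr Rw, IsCostSim M Rr Rw ∧ Rw c d

section Lemmas

variable {M : DRW S}

lemma tau_det {c d d' : M.Wr} (h1 : TauTr M c d) (h2 : TauTr M c d') : d = d' := by
  have := h1.symm.trans h2; simpa using this

lemma out_det {c d d' : M.Wr} {s s' : S} (h1 : OutTr M c s d) (h2 : OutTr M c s' d') :
    s = s' ∧ d = d' := by
  have := h1.symm.trans h2
  simp only [Sum.inl.injEq, Prod.mk.injEq] at this
  exact ⟨this.2, this.1⟩

lemma down_det {c : M.Wr} {s s' : S} (h1 : DownTr M c s) (h2 : DownTr M c s') : s = s' := by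
  have := h1.symm.trans h2; simpa using this

lemma out_not_tau {c d e : M.Wr} {s : S} (h1 : OutTr M c s d) (h2 : TauTr M c e) : False := by
  have := h1.symm.trans h2; simp at this

lemma down_not_tau {c e : M.Wr} {s : S} (h1 : DownTr M c s) (h2 : TauTr M c e) : False := by
  have := h1.symm.trans h2; simp at this

lemma out_not_down {c d : M.Wr} {s t : S} (h1 : OutTr M c s d) (h2 : DownTr M c t) : False := by
  have := h1.symm.trans h2; simp at this

/-- Linearity of deterministic silent reduction. -/
lemma wsil_total {c d1 : M.Wr} (h1 : WSil M c d1) :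
    ∀ {d2 : M.Wr}, WSil M c d2 → WSil M d1 d2 ∨ WSil M d2 d1 := by
  induction h1 using Relation.ReflTransGen.head_induction_on with
  | refl => intro d2 h2; exact Or.inl h2
  | head hab _ ih =>
    intro d2 h2
    rcases h2.cases_head with rfl | ⟨b', hb', hrest⟩
    · exact Or.inr (Relation.ReflTransGen.head hab (by assumption))
    · cases tau_det hab hb'; exact ih hrest

lemma wsil_of_stuck {c d : M.Wr} (h : WSil M c d) (hs : ∀ e, ¬ TauTr M c e) : d = c := by
  rcases h.cases_head with rfl | ⟨b, hb, _⟩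
  · rfl
  · exact absurd hb (hs b)

lemma wout_det {c d d' : M.Wr} {s s' : S} (h1 : WOut M c s d) (h2 : WOut M c s' d') :
    s = s' ∧ d = d' := by
  obtain ⟨e1, hs1, ho1⟩ := h1
  obtain ⟨e2, hs2, ho2⟩ := h2
  have he : e1 = e2 := by
    rcases wsil_total hs1 hs2 with h | h
    · exact (wsil_of_stuck h (fun e he => out_not_tau ho1 he)).symm
    · exact wsil_of_stuck h (fun e he => out_not_tau ho2 he)
  subst he
  exact out_det ho1 ho2

lemma wdone_det {c : M.Wr} {s s' : S} (h1 : WDone M c s) (h2 : WDone M c s') : s = s' := by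
  obtain ⟨e1, hs1, ho1⟩ := h1
  obtain ⟨e2, hs2, ho2⟩ := h2
  have he : e1 = e2 := by
    rcases wsil_total hs1 hs2 with h | h
    · exact (wsil_of_stuck h (fun e he => down_not_tau ho1 he)).symm
    · exact wsil_of_stuck h (fun e he => down_not_tau ho2 he)
  subst he
  exact down_det ho1 ho2

lemma wout_not_wdone {c d : M.Wr} {s t : S} (h1 : WOut M c s d) (h2 : WDone M c t) : False := by
  obtain ⟨e1, hs1, ho1⟩ := h1
  obtain ⟨e2, hs2, ho2⟩ := h2
  have he : e1 = e2 := by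
    rcases wsil_total hs1 hs2 with h | h
    · exact (wsil_of_stuck h (fun e he => out_not_tau ho1 he)).symm
    · exact wsil_of_stuck h (fun e he => down_not_tau ho2 he)
  subst he
  exact out_not_down ho1 ho2

lemma tau_wf (nodiv : ¬ ∃ f : ℕ → M.Wr, ∀ n, TauTr M (f n) (f (n + 1))) :
    WellFounded (fun d c : M.Wr => TauTr M c d) := by
  constructor
  intro a
  by_contra hacc
  have step : ∀ c : M.Wr, ¬ Acc (fun d c : M.Wr => TauTr M c d) c →
      ∃ d, TauTr M c d ∧ ¬ Acc (fun d c : M.Wr => TauTr M c d) d := by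
    intro c hc
    by_contra h
    push_neg at h
    exact hc (Acc.intro c (fun y hy => h y hy))
  let f : ℕ → {c : M.Wr // ¬ Acc (fun d c : M.Wr => TauTr M c d) c} := fun n =>
    Nat.rec ⟨a, hacc⟩
      (fun _ p => ⟨(step p.1 p.2).choose, (step p.1 p.2).choose_spec.2⟩) n
  exact nodiv ⟨fun n => (f n).1, fun n => (step (f n).1 (f n).2).choose_spec.1⟩

/-- Progress: every writer either weakly outputs or weakly terminates. -/
lemma progress (nodiv : ¬ ∃ f : ℕ → M.Wr, ∀ n, TauTr M (f n) (f (n + 1))) (c : M.Wr) :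
    (∃ s d, WOut M c s d) ∨ (∃ s, WDone M c s) := by
  induction c using (tau_wf nodiv).induction with
  | _ c IH =>
    rcases h : M.wstep c with ⟨d, s⟩ | d | s
    · exact Or.inl ⟨s, d, c, Relation.ReflTransGen.refl, h⟩
    · rcases IH d h with ⟨s, e, c', hsil, hout⟩ | ⟨s, c', hsil, hdown⟩
      · exact Or.inl ⟨s, e, c', Relation.ReflTransGen.head h hsil, hout⟩
      · exact Or.inr ⟨s, c', Relation.ReflTransGen.head h hsil, hdown⟩
    · exact Or.inr ⟨s, c, Relation.ReflTransGen.refl, h⟩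

lemma reach_nil {c d : M.Wr} : ReachL M c ([] : List S) d ↔ c = d := Iff.rfl

lemma reach_cons {c d : M.Wr} {s : S} {l : List S} :
    ReachL M c (s :: l) d ↔ ∃ c', WOut M c s c' ∧ ReachL M c' l d := Iff.rfl

lemma reach_det {l : List S} : ∀ {c d d' : M.Wr} {l' : List S}, ReachL M c l d →
    ReachL M c l' d' → l.length = l'.length → l = l' ∧ d = d' := by
  induction l with
  | nil =>
    intro c d d' l' h1 h2 hlen
    cases l' with
    | nil => exact ⟨rfl, h1.symm.trans h2⟩
    | cons a l' => simp at hlen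
  | cons s l ih =>
    intro c d d' l' h1 h2 hlen
    cases l' with
    | nil => simp at hlen
    | cons s' l'' =>
      obtain ⟨e, hw, hr⟩ := h1
      obtain ⟨e', hw', hr'⟩ := h2
      obtain ⟨hss, hee⟩ := wout_det hw hw'
      subst hss; subst hee
      simp only [List.length_cons, Nat.succ.injEq] at hlen
      obtain ⟨h1, h2⟩ := ih hr hr' hlen
      exact ⟨by rw [h1], h2⟩

lemma reach_comp {l1 : List S} : ∀ {c e d : M.Wr} {l2 : List S},
    ReachL M c l1 e → ReachL M e l2 d → ReachL M c (l1 ++ l2) d := by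
  induction l1 with
  | nil => intro c e d l2 h1 h2; cases h1; exact h2
  | cons s l ih =>
    intro c e d l2 h1 h2
    obtain ⟨f, hw, hr⟩ := h1
    exact ⟨f, hw, ih hr h2⟩

lemma reach_split {l1 : List S} : ∀ {c d : M.Wr} {l2 : List S},
    ReachL M c (l1 ++ l2) d → ∃ e, ReachL M c l1 e ∧ ReachL M e l2 d := by
  induction l1 with
  | nil => intro c d l2 h; exact ⟨c, rfl, h⟩
  | cons s l ih =>
    intro c d l2 h
    obtain ⟨f, hw, hr⟩ := h
    obtain ⟨e, he1, he2⟩ := ih hr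
    exact ⟨e, ⟨f, hw, he1⟩, he2⟩

/-- After a finished trace there is no longer reachability chain. -/
lemma done_no_longer {c : M.Wr} {m : ℕ} {s : S} (h : TrcEntry M c m (Sum.inr s))
    {l : List S} {e : M.Wr} (hr : ReachL M c l e) : l.length ≤ m := by
  rcases h with ⟨_, _, _, _, _, _, _, hv⟩ | ⟨l0, g, s', hr0, hl0, hd, hv⟩
  · exact absurd hv (by simp)
  by_contra hlt
  push_neg at hlt
  have hsplit : l = l.take m ++ l.drop m := (List.take_append_drop m l).symm
  rw [hsplit] at hr
  obtain ⟨f, hf1, hf2⟩ := reach_split hr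
  have hlen : (l.take m).length = l0.length := by
    rw [List.length_take, hl0]; omega
  have hfg := (reach_det hf1 hr0 hlen).2
  subst hfg
  have hdrop : l.drop m ≠ [] := by
    intro hnil
    have : (l.drop m).length = l.length - m := List.length_drop  -- length (drop m l) = length l - m
    rw [hnil] at this
    simp at this
    omega
  obtain ⟨u, rest, hu⟩ := List.exists_cons_of_ne_nil hdrop
  rw [hu] at hf2
  obtain ⟨f', hwout, _⟩ := hf2
  cases hv
  exact wout_not_wdone hwout hd

lemma trc_entry_unique {c : M.Wr} {n : ℕ} {v v' : S ⊕ S}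
    (h1 : TrcEntry M c n v) (h2 : TrcEntry M c n v') : v = v' := by
  rcases h1 with ⟨l, d, s, d', hr, hl, hw, hv⟩ | ⟨l, d, s, hr, hl, hw, hv⟩ <;>
    rcases h2 with ⟨l2, e, t, e', hr2, hl2, hw2, hv2⟩ | ⟨l2, e, t, hr2, hl2, hw2, hv2⟩ <;>
      have hde := (reach_det hr hr2 (hl.trans hl2.symm)).2
  · cases hde; cases (wout_det hw hw2).1; rw [hv, hv2]
  · cases hde; exact absurd hw2 (fun h => wout_not_wdone hw h)
  · cases hde; exact absurd hw (fun h => wout_not_wdone hw2 h)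
  · cases hde; cases wdone_det hw hw2; rw [hv, hv2]

lemma inr_unique {c : M.Wr} {n m : ℕ} {s t : S}
    (h1 : TrcEntry M c n (Sum.inr s)) (h2 : TrcEntry M c m (Sum.inr t)) :
    n = m ∧ s = t := by
  have hnm : n = m := by
    have h1' := h1; have h2' := h2
    rcases h1' with ⟨_, _, _, _, _, _, _, hv⟩ | ⟨l1, d1, s1, hr1, hl1, _, _⟩
    · exact absurd hv (by simp)
    rcases h2' with ⟨_, _, _, _, _, _, _, hv⟩ | ⟨l2, d2, s2, hr2, hl2, _, _⟩
    · exact absurd hv (by simp)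
    have a1 := done_no_longer h2 hr1
    have a2 := done_no_longer h1 hr2
    omega
  subst hnm
  have := trc_entry_unique h1 h2
  exact ⟨rfl, by injection this⟩

open Classical in
lemma trcW_eq_some_iff {c : M.Wr} {n : ℕ} {v : S ⊕ S} :
    trcW M c n = some v ↔ TrcEntry M c n v := by
  unfold trcW
  split
  · rename_i h
    constructor
    · intro he
      have := h.choose_spec
      rwa [Option.some_inj.mp he] at this
    · intro he
      exact congrArg some (trc_entry_unique h.choose_spec he)
  · rename_i h
    constructor
    · intro he; cases he
    · intro he; exact absurd ⟨v, he⟩ h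

open Classical in
lemma cstW_eq_some_iff {c : M.Wr} {n : ℕ} {s : S} :
    cstW M c = some (n, s) ↔ TrcEntry M c n (Sum.inr s) := by
  unfold cstW
  split
  · rename_i h
    have hc : TrcEntry M c h.choose.1 (Sum.inr h.choose.2) := trcW_eq_some_iff.mp h.choose_spec
    constructor
    · intro he
      rwa [Option.some_inj.mp he] at hc
    · intro he
      obtain ⟨h1, h2⟩ := inr_unique hc he
      exact congrArg some (Prod.ext h1 h2)
  · rename_i h
    constructor
    · intro he; cases he
    · intro he; exact absurd ⟨(n, s), trcW_eq_some_iff.mpr he⟩ h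

open Classical in
lemma cstW_eq_none_iff {c : M.Wr} :
    cstW M c = none ↔ ∀ n s, ¬ TrcEntry M c n (Sum.inr s) := by
  unfold cstW
  split
  · rename_i h
    constructor
    · intro he; cases he
    · intro hf
      exact absurd (trcW_eq_some_iff.mp h.choose_spec) (hf _ _)
  · rename_i h
    constructor
    · intro _ n s he
      exact h ⟨(n, s), trcW_eq_some_iff.mpr he⟩
    · intro _; rfl

lemma tau_wout {c c' d : M.Wr} {s : S} (h : TauTr M c c') :
    WOut M c s d ↔ WOut M c' s d := by
  constructor
  · rintro ⟨e, hsil, hout⟩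
    rcases hsil.cases_head with rfl | ⟨b, hb, hrest⟩
    · exact absurd h (fun hh => out_not_tau hout hh)
    · cases tau_det h hb; exact ⟨e, hrest, hout⟩
  · rintro ⟨e, hsil, hout⟩
    exact ⟨e, Relation.ReflTransGen.head h hsil, hout⟩

lemma tau_wdone {c c' : M.Wr} {s : S} (h : TauTr M c c') :
    WDone M c s ↔ WDone M c' s := by
  constructor
  · rintro ⟨e, hsil, hout⟩
    rcases hsil.cases_head with rfl | ⟨b, hb, hrest⟩
    · exact absurd h (fun hh => down_not_tau hout hh)
    · cases tau_det h hb; exact ⟨e, hrest, hout⟩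
  · rintro ⟨e, hsil, hout⟩
    exact ⟨e, Relation.ReflTransGen.head h hsil, hout⟩

lemma tau_entry {c c' : M.Wr} (h : TauTr M c c') {n : ℕ} {v : S ⊕ S} :
    TrcEntry M c n v ↔ TrcEntry M c' n v := by
  constructor
  · rintro (⟨l, d, s, d', hr, hl, hw, hv⟩ | ⟨l, d, s, hr, hl, hw, hv⟩)
    · cases l with
      | nil =>
        cases hr
        exact Or.inl ⟨[], c', s, d', rfl, hl, (tau_wout h).mp hw, hv⟩
      | cons u l' =>
        obtain ⟨e, hwu, hrest⟩ := hr
        exact Or.inl ⟨u :: l', d, s, d', ⟨e, (tau_wout h).mp hwu, hrest⟩, hl, hw, hv⟩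
    · cases l with
      | nil =>
        cases hr
        exact Or.inr ⟨[], c', s, rfl, hl, (tau_wdone h).mp hw, hv⟩
      | cons u l' =>
        obtain ⟨e, hwu, hrest⟩ := hr
        exact Or.inr ⟨u :: l', d, s, ⟨e, (tau_wout h).mp hwu, hrest⟩, hl, hw, hv⟩
  · rintro (⟨l, d, s, d', hr, hl, hw, hv⟩ | ⟨l, d, s, hr, hl, hw, hv⟩)
    · cases l with
      | nil =>
        cases hr
        exact Or.inl ⟨[], c, s, d', rfl, hl, (tau_wout h).mpr hw, hv⟩
      | cons u l' =>
        obtain ⟨e, hwu, hrest⟩ := hr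
        exact Or.inl ⟨u :: l', d, s, d', ⟨e, (tau_wout h).mpr hwu, hrest⟩, hl, hw, hv⟩
    · cases l with
      | nil =>
        cases hr
        exact Or.inr ⟨[], c, s, rfl, hl, (tau_wdone h).mpr hw, hv⟩
      | cons u l' =>
        obtain ⟨e, hwu, hrest⟩ := hr
        exact Or.inr ⟨u :: l', d, s, ⟨e, (tau_wout h).mpr hwu, hrest⟩, hl, hw, hv⟩

lemma cst_eq_of_entry_iff {c d : M.Wr}
    (h : ∀ n v, TrcEntry M c n v ↔ TrcEntry M d n v) : cstW M c = cstW M d := by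
  cases hd : cstW M d with
  | none =>
    rw [cstW_eq_none_iff] at hd ⊢
    intro n s he
    exact hd n s ((h n _).mp he)
  | some ns =>
    obtain ⟨n, s⟩ := ns
    rw [cstW_eq_some_iff] at hd ⊢
    exact (h n _).mpr hd

lemma tau_cst {c c' : M.Wr} (h : TauTr M c c') : cstW M c = cstW M c' :=
  cst_eq_of_entry_iff (fun _ _ => tau_entry h)

lemma wsil_cst {c c' : M.Wr} (h : WSil M c c') : cstW M c = cstW M c' := by
  induction h with
  | refl => rfl
  | tail _ hstep ih => exact ih.trans (tau_cst hstep)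

lemma out_entry_zero {c c' : M.Wr} {s : S} (h : OutTr M c s c') :
    TrcEntry M c 0 (Sum.inl s) :=
  Or.inl ⟨[], c, s, c', rfl, rfl, ⟨c, Relation.ReflTransGen.refl, h⟩, rfl⟩

lemma down_entry_zero {c : M.Wr} {s : S} (h : DownTr M c s) :
    TrcEntry M c 0 (Sum.inr s) :=
  Or.inr ⟨[], c, s, rfl, rfl, ⟨c, Relation.ReflTransGen.refl, h⟩, rfl⟩

lemma wout_entry_zero {c c' : M.Wr} {s : S} (h : WOut M c s c') :
    TrcEntry M c 0 (Sum.inl s) :=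
  Or.inl ⟨[], c, s, c', rfl, rfl, h, rfl⟩

lemma wdone_entry_zero {c : M.Wr} {s : S} (h : WDone M c s) :
    TrcEntry M c 0 (Sum.inr s) :=
  Or.inr ⟨[], c, s, rfl, rfl, h, rfl⟩

lemma wout_entry_succ {c c' : M.Wr} {s : S} (h : WOut M c s c') {n : ℕ} {v : S ⊕ S} :
    TrcEntry M c (n + 1) v ↔ TrcEntry M c' n v := by
  constructor
  · rintro (⟨l, d, t, d', hr, hl, hw, hv⟩ | ⟨l, d, t, hr, hl, hw, hv⟩)
    · cases l with
      | nil => simp at hl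
      | cons u l' =>
        obtain ⟨e, hwu, hrest⟩ := hr
        obtain ⟨_, he⟩ := wout_det h hwu
        subst he
        exact Or.inl ⟨l', d, t, d', hrest, by simpa using hl, hw, hv⟩
    · cases l with
      | nil => simp at hl
      | cons u l' =>
        obtain ⟨e, hwu, hrest⟩ := hr
        obtain ⟨_, he⟩ := wout_det h hwu
        subst he
        exact Or.inr ⟨l', d, t, hrest, by simpa using hl, hw, hv⟩
  · rintro (⟨l, d, t, d', hr, hl, hw, hv⟩ | ⟨l, d, t, hr, hl, hw, hv⟩)
    · exact Or.inl ⟨s :: l, d, t, d', ⟨c', h, hr⟩, by simpa using hl, hw, hv⟩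
    · exact Or.inr ⟨s :: l, d, t, ⟨c', h, hr⟩, by simpa using hl, hw, hv⟩

lemma wout_cst {c c' : M.Wr} {s : S} (h : WOut M c s c') :
    cstW M c = (cstW M c').map (fun p => (p.1 + 1, p.2)) := by
  cases hc' : cstW M c' with
  | some ns =>
    obtain ⟨n, t⟩ := ns
    rw [cstW_eq_some_iff] at hc'
    simp only [Option.map_some]
    exact cstW_eq_some_iff.mpr ((wout_entry_succ h).mpr hc')
  | none =>
    rw [cstW_eq_none_iff] at hc'
    simp only [Option.map_none]
    rw [cstW_eq_none_iff]
    intro n t he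
    cases n with
    | zero =>
      have := trc_entry_unique (wout_entry_zero h) he
      simp at this
    | succ m => exact hc' m t ((wout_entry_succ h).mp he)

lemma down_cst {c : M.Wr} {s : S} (h : DownTr M c s) : cstW M c = some (0, s) :=
  cstW_eq_some_iff.mpr (down_entry_zero h)

lemma cst_wdone {c : M.Wr} {s : S} (h : cstW M c = some (0, s)) : WDone M c s := by
  rw [cstW_eq_some_iff] at h
  rcases h with ⟨_, _, _, _, _, _, _, hv⟩ | ⟨l, d, t, hr, hl, hw, hv⟩
  · exact absurd hv (by simp)
  · cases List.length_eq_zero_iff.mp hl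
    cases hr
    cases hv
    exact hw

lemma reach_exists (nodiv : ¬ ∃ f : ℕ → M.Wr, ∀ n, TauTr M (f n) (f (n + 1)))
    {c : M.Wr} (hc : cstW M c = none) (n : ℕ) :
    ∃ (l : List S) (e : M.Wr), ReachL M c l e ∧ l.length = n := by
  induction n with
  | zero => exact ⟨[], c, rfl, rfl⟩
  | succ m ih =>
    obtain ⟨l, e, hr, hl⟩ := ih
    rcases progress nodiv e with ⟨s, e', hout⟩ | ⟨s, hdone⟩
    · refine ⟨l ++ [s], e', reach_comp hr ⟨e', hout, rfl⟩, by simp [hl]⟩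
    · exfalso
      exact cstW_eq_none_iff.mp hc m s
        (Or.inr ⟨l, e, s, hr, hl, hdone, rfl⟩)

-- Simulation step lemmas

lemma simW_sil {Rr : M.Rd → M.Rd → Prop} {Rw : M.Wr → M.Wr → Prop}
    (hs : IsCostSim M Rr Rw) {c c' d : M.Wr} (hR : Rw c d) (h : WSil M c c') :
    ∃ d', WSil M d d' ∧ Rw c' d' := by
  induction h with
  | refl => exact ⟨d, Relation.ReflTransGen.refl, hR⟩
  | tail _ hstep ih =>
    obtain ⟨d1, hd1, hR1⟩ := ih
    obtain ⟨d2, hd2, hR2⟩ := hs.2.1 _ _ _ hR1 hstep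
    exact ⟨d2, hd1.trans hd2, hR2⟩

lemma simW_done {Rr : M.Rd → M.Rd → Prop} {Rw : M.Wr → M.Wr → Prop}
    (hs : IsCostSim M Rr Rw) {c d : M.Wr} {s : S} (hR : Rw c d) (h : WDone M c s) :
    WDone M d s := by
  obtain ⟨e, hsil, hdown⟩ := h
  obtain ⟨d1, hd1, hR1⟩ := simW_sil hs hR hsil
  obtain ⟨f, hf1, hf2⟩ := hs.2.2.2 _ _ _ hR1 hdown
  exact ⟨f, hd1.trans hf1, hf2⟩

lemma simW_out {Rr : M.Rd → M.Rd → Prop} {Rw : M.Wr → M.Wr → Prop}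
    (hs : IsCostSim M Rr Rw) {c c' d : M.Wr} {s : S} (hR : Rw c d) (h : WOut M c s c') :
    ∃ d' s', WOut M d s' d' ∧ Rw c' d' := by
  obtain ⟨e, hsil, hout⟩ := h
  obtain ⟨d1, hd1, hR1⟩ := simW_sil hs hR hsil
  obtain ⟨d', s', ⟨m, hm1, hm2⟩, hR2⟩ := hs.2.2.1 _ _ _ _ hR1 hout
  exact ⟨d', s', ⟨m, hd1.trans hm1, hm2⟩, hR2⟩

lemma sim_reach {Rr : M.Rd → M.Rd → Prop} {Rw : M.Wr → M.Wr → Prop}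
    (hs : IsCostSim M Rr Rw) {l : List S} :
    ∀ {c d e : M.Wr}, Rw c d → ReachL M c l e →
      ∃ (l' : List S) (e' : M.Wr), ReachL M d l' e' ∧ l'.length = l.length ∧ Rw e e' := by
  induction l with
  | nil =>
    intro c d e hR hr
    cases hr
    exact ⟨[], d, rfl, rfl, hR⟩
  | cons s l ih =>
    intro c d e hR hr
    obtain ⟨f, hw, hrest⟩ := hr
    obtain ⟨d1, s', hw', hR1⟩ := simW_out hs hR hw
    obtain ⟨l', e', hr', hl', hR2⟩ := ih hR1 hrest
    exact ⟨s' :: l', e', ⟨d1, hw', hr'⟩, by simp [hl'], hR2⟩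

/-- Simulation implies cost equality (forward direction on writers). -/
lemma sim_cst (nodiv : ¬ ∃ f : ℕ → M.Wr, ∀ n, TauTr M (f n) (f (n + 1)))
    {Rr : M.Rd → M.Rd → Prop} {Rw : M.Wr → M.Wr → Prop}
    (hs : IsCostSim M Rr Rw) {c d : M.Wr} (hR : Rw c d) : cstW M c = cstW M d := by
  cases hc : cstW M c with
  | some ns =>
    obtain ⟨n, s⟩ := ns
    have he := cstW_eq_some_iff.mp hc
    rcases he with ⟨_, _, _, _, _, _, _, hv⟩ | ⟨l, g, s', hr, hl, hdone, hv⟩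
    · exact absurd hv (by simp)
    cases hv
    obtain ⟨l', e', hr', hl', hR'⟩ := sim_reach hs hR hr
    exact (cstW_eq_some_iff.mpr
      (Or.inr ⟨l', e', s, hr', hl'.trans hl, simW_done hs hR' hdone, rfl⟩)).symm
  | none =>
    cases hd : cstW M d with
    | none => rfl
    | some ms =>
      obtain ⟨m, s⟩ := ms
      exfalso
      have hed := cstW_eq_some_iff.mp hd
      obtain ⟨l, e, hr, hl⟩ := reach_exists nodiv hc (m + 1)
      obtain ⟨l', e', hr', hl', _⟩ := sim_reach hs hR hr
      have := done_no_longer hed hr'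
      omega

/-- Cost equivalence is a cost simulation. -/
lemma cst_eq_isCostSim (nodiv : ¬ ∃ f : ℕ → M.Wr, ∀ n, TauTr M (f n) (f (n + 1))) :
    IsCostSim M (fun p q => cstR M p = cstR M q) (fun c d => cstW M c = cstW M d) := by
  refine ⟨?_, ?_, ?_, ?_⟩
  · intro p q s c hpq hc
    refine ⟨M.rstep q s, rfl, ?_⟩
    rw [← hc]
    exact congrFun hpq s
  · intro c d c' hcd h
    exact ⟨d, Relation.ReflTransGen.refl, (tau_cst h).symm.trans hcd⟩
  · intro c d s c' hcd h
    have hout : WOut M c s c' := ⟨c, Relation.ReflTransGen.refl, h⟩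
    have hmap := wout_cst hout
    cases hc' : cstW M c' with
    | some ns =>
      obtain ⟨n, t⟩ := ns
      have hd : cstW M d = some (n + 1, t) := by
        rw [← hcd, hmap, hc']; rfl
      have hed := cstW_eq_some_iff.mp hd
      rcases hed with ⟨_, _, _, _, _, _, _, hv⟩ | ⟨l, g, t', hr, hl, hdone, hv⟩
      · exact absurd hv (by simp)
      cases hv
      cases l with
      | nil => simp at hl
      | cons u l'' =>
        obtain ⟨e, hw, hrest⟩ := hr
        refine ⟨e, u, hw, ?_⟩
        show cstW M c' = cstW M e
        rw [hc']
        exact (cstW_eq_some_iff.mpr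
          (Or.inr ⟨l'', g, t, hrest, by simpa using hl, hdone, rfl⟩)).symm
    | none =>
      have hd : cstW M d = none := by rw [← hcd, hmap, hc']; rfl
      rcases progress nodiv d with ⟨u, d', hw⟩ | ⟨u, hdone⟩
      · refine ⟨d', u, hw, ?_⟩
        have := wout_cst hw
        rw [hd] at this
        show cstW M c' = cstW M d'
        cases hd' : cstW M d' with
        | none => rw [hc']
        | some ms => rw [hd'] at this; simp at this
      · exfalso
        have := cstW_eq_some_iff.mpr (wdone_entry_zero hdone)
        rw [hd] at this
        cases this
  · intro c d s hcd h
    have hc : cstW M c = some (0, s) := down_cst h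
    exact cst_wdone (hcd.symm.trans hc)

end Lemmas

/-- in a deterministic reader–writer transition system with no
infinite chain of consecutive silent writer transitions, cost similarity coincides
with cost equivalence, both on readers and on writers. -/
theorem cost_similarity_eq_cost_equivalence (M : DRW S)
    (nodiv : ¬ ∃ f : ℕ → M.Wr, ∀ n, TauTr M (f n) (f (n + 1))) :
    (∀ p q : M.Rd, CostSimR M p q ↔ cstR M p = cstR M q) ∧
    (∀ c d : M.Wr, CostSimW M c d ↔ cstW M c = cstW M d) := by
  constructor
  · intro p q
    constructor
    · rintro ⟨Rr, Rw, hs, hpq⟩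
      funext s
      obtain ⟨d, hd, hR⟩ := hs.1 p q s (M.rstep p s) hpq rfl
      show cstW M (M.rstep p s) = cstW M (M.rstep q s)
      rw [hd]
      exact sim_cst nodiv hs hR
    · intro h
      exact ⟨_, _, cst_eq_isCostSim nodiv, h⟩
  · intro c d
    constructor
    · rintro ⟨Rr, Rw, hs, hR⟩
      exact sim_cst nodiv hs hR
    · intro h
      exact ⟨_, _, cst_eq_isCostSim nodiv, h⟩

end RW
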